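/- Let K be a compact Hausdorff topological space with no isolated point and let f₁,…,fₙ be norm-one elements of C(K). Then for every i ∈ {1,…,n} there exists a sequence (g_k^i)_{k∈ℕ} of norm-one elements of C(K) such that g_k^i converges weakly to fᵢ as k → ∞ for every i, and ‖Σⱼ₌₁ⁿ λⱼ g_k^j‖ = Σⱼ₌₁ⁿ |λⱼ| holds for all real scalars λ₁,…,λₙ and every k ∈ ℕ. -/

import Mathlib

open Filter Topology Set

section Aux

variable {K : Type*} [TopologicalSpace K]

theorem aux_two_points (hK : ∀ t : K, ¬ IsOpen ({t} : Set K))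
    {U : Set K} (hU : IsOpen U) (hne : U.Nonempty) :
    ∃ a ∈ U, ∃ b ∈ U, a ≠ b := by
  obtain ⟨a, ha⟩ := hne
  by_contra h
  push_neg at h
  have hUa : U = {a} := by
    ext x
    constructor
    · intro hx; exact h x hx a ha
    · rintro rfl; exact ha
  exact hK a (hUa ▸ hU)

theorem aux_split [T2Space K] (hK : ∀ t : K, ¬ IsOpen ({t} : Set K))
    {U : Set K} (hU : IsOpen U) (hne : U.Nonempty) :
    ∃ V W : Set K, IsOpen V ∧ V.Nonempty ∧ V ⊆ U ∧
      IsOpen W ∧ W.Nonempty ∧ W ⊆ U ∧ Disjoint V W := by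
  obtain ⟨a, ha, b, hb, hab⟩ := aux_two_points hK hU hne
  obtain ⟨A, B, hA, hB, haA, hbB, hAB⟩ := t2_separation hab
  exact ⟨U ∩ A, U ∩ B, hU.inter hA, ⟨a, ha, haA⟩, inter_subset_left,
    hU.inter hB, ⟨b, hb, hbB⟩, inter_subset_left,
    hAB.mono inter_subset_right inter_subset_right⟩

theorem aux_seq [T2Space K] [Nonempty K] (hK : ∀ t : K, ¬ IsOpen ({t} : Set K)) :
    ∃ V : ℕ → Set K, (∀ k, IsOpen (V k)) ∧ (∀ k, (V k).Nonempty) ∧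
      ∀ j k, j < k → Disjoint (V j) (V k) := by
  have h2 : ∀ U : {U : Set K // IsOpen U ∧ U.Nonempty},
      ∃ V W : {U : Set K // IsOpen U ∧ U.Nonempty},
        V.1 ⊆ U.1 ∧ W.1 ⊆ U.1 ∧ Disjoint V.1 W.1 := by
    rintro ⟨U, hU, hne⟩
    obtain ⟨V, W, hVo, hVne, hVU, hWo, hWne, hWU, hd⟩ := aux_split hK hU hne
    exact ⟨⟨V, hVo, hVne⟩, ⟨W, hWo, hWne⟩, hVU, hWU, hd⟩
  choose Vf Wf hVs hWs hD using h2
  let p : ℕ → {U : Set K // IsOpen U ∧ U.Nonempty} :=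
    fun k => Nat.rec ⟨Set.univ, isOpen_univ, Set.univ_nonempty⟩ (fun _ U => Wf U) k
  have hmono : ∀ j k, j ≤ k → (p k).1 ⊆ (p j).1 := by
    intro j k hjk
    induction k with
    | zero =>
      have : j = 0 := Nat.le_zero.mp hjk
      subst this; exact subset_rfl
    | succ k ih =>
      rcases Nat.lt_or_ge j (k+1) with h | h
      · exact (hWs (p k)).trans (ih (Nat.lt_succ_iff.mp h))
      · have : j = k+1 := le_antisymm hjk h
        subst this; exact subset_rfl
  refine ⟨fun k => (Vf (p k)).1, fun k => (Vf (p k)).2.1, fun k => (Vf (p k)).2.2, ?_⟩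
  intro j k hjk
  have h1 : (Vf (p k)).1 ⊆ (Wf (p j)).1 := (hVs (p k)).trans (hmono (j+1) k hjk)
  exact (hD (p j)).mono_right h1

theorem aux_fin [T2Space K] (hK : ∀ t : K, ¬ IsOpen ({t} : Set K)) :
    ∀ (m : ℕ) {U : Set K}, IsOpen U → U.Nonempty →
    ∃ W : Fin m → Set K, (∀ i, IsOpen (W i)) ∧ (∀ i, (W i).Nonempty) ∧
      (∀ i, W i ⊆ U) ∧ ∀ i j, i ≠ j → Disjoint (W i) (W j) := by
  intro m
  induction m with
  | zero =>
    intro U hU hne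
    exact ⟨fun i => i.elim0, fun i => i.elim0, fun i => i.elim0,
      fun i => i.elim0, fun i => i.elim0⟩
  | succ m ih =>
    intro U hU hne
    obtain ⟨V, W, hVo, hVne, hVU, hWo, hWne, hWU, hd⟩ := aux_split hK hU hne
    obtain ⟨F, hFo, hFne, hFsub, hFd⟩ := ih hWo hWne
    refine ⟨Fin.cons V F, ?_, ?_, ?_, ?_⟩
    · exact Fin.cases (by simpa using hVo) (fun i => by simpa using hFo i)
    · exact Fin.cases (by simpa using hVne) (fun i => by simpa using hFne i)
    · exact Fin.cases (by simpa using hVU) (fun i => by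
        simpa using (hFsub i).trans hWU)
    · intro i j hij
      induction i using Fin.cases with
      | zero =>
        induction j using Fin.cases with
        | zero => exact absurd rfl hij
        | succ j => simpa using hd.mono_right (hFsub j)
      | succ i =>
        induction j using Fin.cases with
        | zero => simpa using (hd.mono_right (hFsub i)).symm
        | succ j =>
          have hij' : i ≠ j := fun h => hij (by rw [h])
          simpa using hFd i j hij'

end Aux

theorem aux_bump {K : Type*} [TopologicalSpace K] [CompactSpace K] [T2Space K]
    (hK : ∀ t : K, ¬ IsOpen ({t} : Set K)) (n : ℕ)
    {V : Set K} (hV : IsOpen V) (hVne : V.Nonempty) :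
    ∃ (t : (Fin n → Bool) → K) (u : (Fin n → Bool) → C(K, ℝ)),
      (∀ ε x, 0 ≤ u ε x) ∧
      (∀ x, ∑ ε, u ε x ≤ 1) ∧
      (∀ ε, u ε (t ε) = 1) ∧
      (∀ ε' ε, ε' ≠ ε → u ε' (t ε) = 0) ∧
      (∀ ε x, x ∉ V → u ε x = 0) := by
  classical
  let e : (Fin n → Bool) ≃ Fin (Fintype.card (Fin n → Bool)) := Fintype.equivFin _
  obtain ⟨W', hWo, hWne, hWsub, hWd⟩ :=
    aux_fin hK (Fintype.card (Fin n → Bool)) hV hVne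
  set W : (Fin n → Bool) → Set K := fun ε => W' (e ε) with hW
  have hWd' : ∀ ε ε', ε ≠ ε' → Disjoint (W ε) (W ε') := by
    intro ε ε' h
    exact hWd _ _ (fun hc => h (e.injective hc))
  choose t ht using fun ε => hWne (e ε)
  -- ht : ∀ ε, t ε ∈ W ε
  have hbump : ∀ ε : Fin n → Bool, ∃ u : C(K, ℝ),
      Set.EqOn u 0 (W ε)ᶜ ∧ Set.EqOn u 1 {t ε} ∧ ∀ x, u x ∈ Set.Icc (0:ℝ) 1 := by
    intro ε
    exact exists_continuous_zero_one_of_isClosed (hWo (e ε)).isClosed_compl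
      isClosed_singleton (by simpa [Set.disjoint_singleton_right] using ht ε)
  choose u hu0 hu1 huIcc using hbump
  have huW : ∀ ε x, x ∉ W ε → u ε x = 0 := by
    intro ε x hx
    simpa using hu0 ε hx
  refine ⟨t, u, fun ε x => (huIcc ε x).1, ?_, fun ε => by simpa using hu1 ε rfl,
    ?_, ?_⟩
  · intro x
    by_cases hx : ∃ ε₀, x ∈ W ε₀
    · obtain ⟨ε₀, hε₀⟩ := hx
      have : ∑ ε, u ε x = u ε₀ x := by
        refine Finset.sum_eq_single ε₀ (fun ε _ hne => ?_) (fun h => absurd (Finset.mem_univ _) h)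
        exact huW ε x (fun hc => (hWd' ε ε₀ hne).ne_of_mem hc hε₀ rfl)
      rw [this]
      exact (huIcc ε₀ x).2
    · push_neg at hx
      have : ∑ ε, u ε x = 0 := Finset.sum_eq_zero fun ε _ => huW ε x (hx ε)
      simp [this]
  · intro ε' ε hne
    exact huW ε' (t ε) (fun hc => (hWd' ε' ε hne).ne_of_mem hc (ht ε) rfl)
  · intro ε x hx
    exact huW ε x (fun hc => hx (hWsub (e ε) hc))

theorem stmt_7 {K : Type*} [TopologicalSpace K] [CompactSpace K] [T2Space K]
    (hK : ∀ t : K, ¬ IsOpen ({t} : Set K))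
    (n : ℕ) (f : Fin n → C(K, ℝ)) (hf : ∀ i, ‖f i‖ = 1) :
    ∃ g : ℕ → Fin n → C(K, ℝ),
      (∀ k i, ‖g k i‖ = 1) ∧
      (∀ i, ∀ φ : C(K, ℝ) →L[ℝ] ℝ,
        Tendsto (fun k => φ (g k i)) atTop (𝓝 (φ (f i)))) ∧
      (∀ k, ∀ lam : Fin n → ℝ, ‖∑ i, lam i • g k i‖ = ∑ i, |lam i|) := by
  classical
  rcases Nat.eq_zero_or_pos n with hn | hn
  · subst hn
    refine ⟨fun _ => f, fun k i => i.elim0, fun i => i.elim0, ?_⟩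
    intro k lam
    simp
  have hKne : Nonempty K := by
    by_contra h
    rw [not_nonempty_iff] at h
    have hf0 : f ⟨0, hn⟩ = 0 := by ext x; exact (h.false x).elim
    have h0 := hf ⟨0, hn⟩
    rw [hf0, norm_zero] at h0
    norm_num at h0
  obtain ⟨V, hVo, hVne, hVd⟩ := aux_seq hK
  have hVd' : ∀ j k, j ≠ k → Disjoint (V j) (V k) := by
    intro j k h
    rcases lt_or_gt_of_ne h with h | h
    · exact hVd j k h
    · exact (hVd k j h).symm
  have hb := fun k => aux_bump hK n (hVo k) (hVne k)
  choose t u h1 h2 h3 h4 h5 using hb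
  -- sign patterns
  set b : (Fin n → Bool) → Fin n → ℝ := fun ε i => if ε i then 1 else -1 with hbdef
  have hb1 : ∀ ε i, |b ε i| = 1 := by
    intro ε i
    by_cases h : ε i <;> simp [hbdef, h]
  set g : ℕ → Fin n → C(K, ℝ) :=
    fun k i => f i + ∑ ε, u k ε * (ContinuousMap.const K (b ε i) - f i) with hg
  have hgval : ∀ k i x, g k i x = f i x + ∑ ε, u k ε x * (b ε i - f i x) := by
    intro k i x
    simp [hg, ContinuousMap.sum_apply]
  have hfx : ∀ i (x : K), |f i x| ≤ 1 := by
    intro i x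
    have := (f i).norm_coe_le_norm x
    rwa [hf i, Real.norm_eq_abs] at this
  -- pointwise bound
  have habs : ∀ k i x, |g k i x| ≤ 1 := by
    intro k i x
    rw [hgval]
    have key : f i x + ∑ ε, u k ε x * (b ε i - f i x)
        = (1 - ∑ ε, u k ε x) * f i x + ∑ ε, u k ε x * b ε i := by
      simp only [mul_sub]
      rw [Finset.sum_sub_distrib, ← Finset.sum_mul]
      ring
    rw [key]
    have hU0 : (0:ℝ) ≤ ∑ ε, u k ε x := Finset.sum_nonneg fun ε _ => h1 k ε x
    have hU1 : ∑ ε, u k ε x ≤ 1 := h2 k x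
    have hS : |∑ ε, u k ε x * b ε i| ≤ ∑ ε, u k ε x := by
      calc |∑ ε, u k ε x * b ε i| ≤ ∑ ε, |u k ε x * b ε i| :=
            Finset.abs_sum_le_sum_abs _ _
        _ = ∑ ε, u k ε x := by
            refine Finset.sum_congr rfl fun ε _ => ?_
            rw [abs_mul, hb1, mul_one, abs_of_nonneg (h1 k ε x)]
    calc |(1 - ∑ ε, u k ε x) * f i x + ∑ ε, u k ε x * b ε i|
        ≤ |(1 - ∑ ε, u k ε x) * f i x| + |∑ ε, u k ε x * b ε i| := abs_add_le _ _
      _ ≤ (1 - ∑ ε, u k ε x) * 1 + ∑ ε, u k ε x := by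
          refine add_le_add ?_ hS
          rw [abs_mul, abs_of_nonneg (by linarith)]
          exact mul_le_mul_of_nonneg_left (hfx i x) (by linarith)
      _ = 1 := by ring
  -- value at the marked points
  have hval : ∀ k i ε, g k i (t k ε) = b ε i := by
    intro k i ε
    rw [hgval]
    have : ∑ ε', u k ε' (t k ε) * (b ε' i - f i (t k ε))
        = u k ε (t k ε) * (b ε i - f i (t k ε)) := by
      refine Finset.sum_eq_single ε (fun ε' _ hne => ?_)
        (fun h => absurd (Finset.mem_univ _) h)
      rw [h4 k ε' ε hne, zero_mul]
    rw [this, h3 k ε]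
    ring
  -- norms are one
  have hnorm : ∀ k i, ‖g k i‖ = 1 := by
    intro k i
    refine le_antisymm ?_ ?_
    · rw [ContinuousMap.norm_le _ zero_le_one]
      intro x
      rw [Real.norm_eq_abs]
      exact habs k i x
    · have := (g k i).norm_coe_le_norm (t k (fun _ => true))
      rw [hval k i, Real.norm_eq_abs] at this
      calc (1:ℝ) = |b (fun _ => true) i| := (hb1 (fun _ => true) i).symm
        _ ≤ ‖g k i‖ := this
  refine ⟨g, hnorm, ?_, ?_⟩
  · -- weak convergence
    intro i φ
    set h : ℕ → C(K, ℝ) := fun k => g k i - f i with hh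
    have hhval : ∀ k x, h k x = ∑ ε, u k ε x * (b ε i - f i x) := by
      intro k x
      simp only [hh, ContinuousMap.sub_apply, hgval]
      ring
    have hout : ∀ k x, x ∉ V k → h k x = 0 := by
      intro k x hx
      rw [hhval]
      exact Finset.sum_eq_zero fun ε _ => by rw [h5 k ε x hx, zero_mul]
    have hb2 : ∀ k x, |h k x| ≤ 2 := by
      intro k x
      rw [hhval]
      calc |∑ ε, u k ε x * (b ε i - f i x)| ≤ ∑ ε, |u k ε x * (b ε i - f i x)| :=
            Finset.abs_sum_le_sum_abs _ _
        _ ≤ ∑ ε, u k ε x * 2 := by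
            refine Finset.sum_le_sum fun ε _ => ?_
            rw [abs_mul, abs_of_nonneg (h1 k ε x)]
            refine mul_le_mul_of_nonneg_left ?_ (h1 k ε x)
            calc |b ε i - f i x| ≤ |b ε i| + |f i x| := abs_sub _ _
              _ ≤ 1 + 1 := by rw [hb1]; exact add_le_add_right (hfx i x) 1
              _ = 2 := by norm_num
        _ = (∑ ε, u k ε x) * 2 := by rw [Finset.sum_mul]
        _ ≤ 2 := by have := h2 k x; linarith
    -- partial sums bound
    have hpartial : ∀ m, ∑ k ∈ Finset.range m, |φ (h k)| ≤ 2 * ‖φ‖ := by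
      intro m
      set s : ℕ → ℝ := fun k => if 0 ≤ φ (h k) then 1 else -1 with hs
      set F : C(K, ℝ) := ∑ k ∈ Finset.range m, s k • h k with hF
      have hFnorm : ‖F‖ ≤ 2 := by
        rw [ContinuousMap.norm_le _ (by norm_num)]
        intro x
        rw [Real.norm_eq_abs]
        have hFx : F x = ∑ k ∈ Finset.range m, s k * h k x := by
          simp [hF, ContinuousMap.sum_apply]
        rw [hFx]
        by_cases hx : ∃ k₀ ∈ Finset.range m, x ∈ V k₀
        · obtain ⟨k₀, hk₀m, hk₀⟩ := hx
          have : ∑ k ∈ Finset.range m, s k * h k x = s k₀ * h k₀ x := by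
            refine Finset.sum_eq_single_of_mem k₀ hk₀m (fun k _ hne => ?_)
            rw [hout k x (fun hc => (hVd' k k₀ hne).ne_of_mem hc hk₀ rfl), mul_zero]
          rw [this, abs_mul]
          have hsk : |s k₀| = 1 := by
            by_cases hpos : 0 ≤ φ (h k₀) <;> simp [hs, hpos]
          rw [hsk, one_mul]
          exact hb2 k₀ x
        · push_neg at hx
          have : ∑ k ∈ Finset.range m, s k * h k x = 0 :=
            Finset.sum_eq_zero fun k hk => by rw [hout k x (hx k hk), mul_zero]
          rw [this]; norm_num
      have hφF : φ F = ∑ k ∈ Finset.range m, s k * φ (h k) := by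
        rw [hF, map_sum]
        exact Finset.sum_congr rfl fun k _ => by rw [map_smul]; rfl
      have heq : ∀ k, s k * φ (h k) = |φ (h k)| := by
        intro k
        by_cases hpos : 0 ≤ φ (h k)
        · rw [hs]; simp only [hpos, if_true, one_mul]; exact (abs_of_nonneg hpos).symm
        · rw [hs]; simp only [hpos, if_false, neg_one_mul]
          exact (abs_of_neg (lt_of_not_ge hpos)).symm
      calc ∑ k ∈ Finset.range m, |φ (h k)|
          = φ F := by rw [hφF]; exact Finset.sum_congr rfl fun k _ => (heq k).symm
        _ ≤ |φ F| := le_abs_self _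
        _ ≤ ‖φ‖ * ‖F‖ := by
            rw [← Real.norm_eq_abs]
            exact φ.le_opNorm F
        _ ≤ ‖φ‖ * 2 := mul_le_mul_of_nonneg_left hFnorm (norm_nonneg φ)
        _ = 2 * ‖φ‖ := by ring
    have hsummable : Summable fun k => φ (h k) :=
      Summable.of_abs (summable_of_sum_range_le (fun k => abs_nonneg _) hpartial)
    have htend : Tendsto (fun k => φ (h k)) atTop (𝓝 0) :=
      hsummable.tendsto_atTop_zero
    have : ∀ k, φ (g k i) = φ (f i) + φ (h k) := by
      intro k
      rw [← map_add]
      congr 1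
      simp [hh]
    simp only [this]
    have := htend.const_add (φ (f i))
    simpa using this
  · -- ℓ₁ condition
    intro k lam
    refine le_antisymm ?_ ?_
    · calc ‖∑ i, lam i • g k i‖ ≤ ∑ i, ‖lam i • g k i‖ := norm_sum_le _ _
        _ = ∑ i, |lam i| := by
            refine Finset.sum_congr rfl fun i _ => ?_
            rw [norm_smul (lam i) (g k i), hnorm, mul_one, Real.norm_eq_abs]
    · set ε : Fin n → Bool := fun i => decide (0 ≤ lam i) with hε
      have hptval : (∑ i, lam i • g k i) (t k ε) = ∑ i, |lam i| := by
        rw [ContinuousMap.sum_apply]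
        refine Finset.sum_congr rfl fun i _ => ?_
        rw [ContinuousMap.smul_apply, hval k i ε, smul_eq_mul]
        by_cases hpos : 0 ≤ lam i
        · simp [hbdef, hε, hpos, abs_of_nonneg hpos]
        · simp [hbdef, hε, hpos, abs_of_neg (lt_of_not_ge hpos)]
      have := (∑ i, lam i • g k i).norm_coe_le_norm (t k ε)
      rw [hptval, Real.norm_eq_abs] at this
      exact le_trans (le_abs_self _) this
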